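/- Let Σ be a 2-regular graph with vertex set Z_{2n} ∪ {∞} such that the multiset of differences ΔΣ contains every nonzero element of Z_{2n}, and Σ + n = Σ (translation by n fixing ∞ is an automorphism). Then the n translates {Σ + i : 0 ≤ i ≤ n−1} form a 2-factorization of the complete graph K_{2n+1} on vertex set Z_{2n} ∪ {∞}, with each factor isomorphic to Σ. -/

import Mathlib

instance twoMulNeZero (n : ℕ) [NeZero n] : NeZero (2 * n) :=
  ⟨by have := NeZero.ne n; omega⟩

/-- The gTranslate `G + i` of a graph on `Z_m ∪ {∞}`: translation by `i` fixes `∞ = none`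
and adds `i` to every other vertex. -/
def gTranslate {m : ℕ} (G : SimpleGraph (Option (ZMod m))) (i : ZMod m) :
    SimpleGraph (Option (ZMod m)) where
  Adj u v := G.Adj (u.map (· - i)) (v.map (· - i))
  symm := ⟨fun _ _ h => G.adj_symm h⟩
  loopless := ⟨fun _ h => G.irrefl h⟩

instance {m : ℕ} (G : SimpleGraph (Option (ZMod m))) [h : DecidableRel G.Adj] (i : ZMod m) :
    DecidableRel (gTranslate G i).Adj := fun u v => h (u.map (· - i)) (v.map (· - i))

lemma gTranslate_gTranslate {m : ℕ} (G : SimpleGraph (Option (ZMod m))) (a b : ZMod m) :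
    gTranslate (gTranslate G a) b = gTranslate G (a + b) := by
  ext u v
  show G.Adj ((u.map _).map _) ((v.map _).map _) ↔ G.Adj (u.map _) (v.map _)
  rw [Option.map_map, Option.map_map]
  have : ((· - a) ∘ (· - b) : ZMod m → ZMod m) = (· - (a + b)) := by
    funext x; simp [sub_sub, add_comm]
  rw [this]

def gTranslateIso {m : ℕ} (G : SimpleGraph (Option (ZMod m))) (i : ZMod m) :
    gTranslate G i ≃g G where
  toEquiv := Equiv.optionCongr (Equiv.subRight i)
  map_rel_iff' := Iff.rfl

lemma iso_degree {V W : Type*} [Fintype V] [Fintype W] [DecidableEq V] [DecidableEq W]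
    {G : SimpleGraph V} {H : SimpleGraph W} [DecidableRel G.Adj] [DecidableRel H.Adj]
    (f : G ≃g H) (v : V) : G.degree v = H.degree (f v) := by
  rw [← SimpleGraph.card_neighborSet_eq_degree, ← SimpleGraph.card_neighborSet_eq_degree]
  exact Fintype.card_congr (f.mapNeighborSet v)

-- reduce any translate to a translate by i < n
lemma translate_reduce (n : ℕ) [NeZero n] (S : SimpleGraph (Option (ZMod (2 * n))))
    (hper : gTranslate S ((n : ℕ) : ZMod (2 * n)) = S) (j : ZMod (2 * n)) :
    ∃ i < n, gTranslate S ((i : ℕ) : ZMod (2 * n)) = gTranslate S j := by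
  have hn : 0 < n := Nat.pos_of_ne_zero (NeZero.ne n)
  have hjv : j.val < 2 * n := ZMod.val_lt j
  by_cases h : j.val < n
  · exact ⟨j.val, h, by rw [ZMod.natCast_val, ZMod.cast_id]⟩
  · refine ⟨j.val - n, by omega, ?_⟩
    have hcast : ((j.val - n : ℕ) : ZMod (2 * n)) = j - (n : ℕ) := by
      rw [Nat.cast_sub (by omega)]
      rw [ZMod.natCast_val, ZMod.cast_id]
    have h2 : ((n:ℕ) : ZMod (2*n)) + (j - (n:ℕ)) = j := by ring
    rw [hcast]
    conv_rhs => rw [← h2, ← gTranslate_gTranslate, hper]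

lemma multiset_card_finset_sum {α β : Type*} (s : Finset β) (f : β → Multiset α) :
    Multiset.card (∑ i ∈ s, f i) = ∑ i ∈ s, Multiset.card (f i) := by
  classical
  induction s using Finset.induction with
  | empty => simp
  | insert _ _ h ih => simp [Finset.sum_insert h, ih]

/-- a 2-starter `S` over `Z_{2n}` (2-regular, differences covering all nonzero
elements, invariant under translation by `n`) yields, via its `n` translates, a
2-factorization of the complete graph on `Z_{2n} ∪ {∞}`, each factor isomorphic to `S`. -/
theorem stmt3 (n : ℕ) [NeZero n] (S : SimpleGraph (Option (ZMod (2 * n))))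
    [DecidableRel S.Adj]
    (h2reg : ∀ v, S.degree v = 2)
    (hdiff : ∀ d : ZMod (2 * n), d ≠ 0 →
      ∃ x y : ZMod (2 * n), S.Adj (some x) (some y) ∧ x - y = d)
    (hper : gTranslate S ((n : ℕ) : ZMod (2 * n)) = S) :
    (∑ i ∈ Finset.range n, (gTranslate S ((i : ℕ) : ZMod (2 * n))).edgeFinset.val)
        = (⊤ : SimpleGraph (Option (ZMod (2 * n)))).edgeFinset.val ∧
    (∀ i ∈ Finset.range n, ∀ v, (gTranslate S ((i : ℕ) : ZMod (2 * n))).degree v = 2) ∧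
    (∀ i ∈ Finset.range n, Nonempty (gTranslate S ((i : ℕ) : ZMod (2 * n)) ≃g S)) := by
  have hcardV : Fintype.card (Option (ZMod (2 * n))) = 2 * n + 1 := by
    simp [ZMod.card]
  -- degrees of translates
  have hdeg : ∀ (c : ZMod (2 * n)) v, (gTranslate S c).degree v = 2 := by
    intro c v
    rw [iso_degree (gTranslateIso S c)]
    exact h2reg _
  -- edge count of translates
  have hE : ∀ c : ZMod (2 * n), (gTranslate S c).edgeFinset.card = 2 * n + 1 := by
    intro c
    have h := SimpleGraph.sum_degrees_eq_twice_card_edges (gTranslate S c)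
    simp only [hdeg, Finset.sum_const, smul_eq_mul, Finset.card_univ, hcardV] at h
    omega
  -- covering: every edge of ⊤ lies in some translate with index < n
  have hcov : ∀ e ∈ (⊤ : SimpleGraph (Option (ZMod (2 * n)))).edgeFinset,
      ∃ i ∈ Finset.range n, e ∈ (gTranslate S ((i : ℕ) : ZMod (2 * n))).edgeFinset := by
    intro e he
    induction e with
    | h u v =>
      rw [SimpleGraph.mem_edgeFinset, SimpleGraph.mem_edgeSet, SimpleGraph.top_adj] at he
      have key : ∃ j : ZMod (2 * n), (gTranslate S j).Adj u v := by
        match u, v with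
        | none, none => exact absurd rfl he
        | some x, some y =>
          have hd : x - y ≠ 0 := sub_ne_zero.mpr (by simpa using he)
          obtain ⟨a, b, hab, hd'⟩ := hdiff _ hd
          refine ⟨x - a, ?_⟩
          show S.Adj (some (x - (x - a))) (some (y - (x - a)))
          have h1 : x - (x - a) = a := by ring
          have h2 : y - (x - a) = b := by linear_combination hd'
          rw [h1, h2]; exact hab
        | none, some x =>
          obtain ⟨w, hw⟩ := (SimpleGraph.degree_pos_iff_exists_adj S none).mp
            (by rw [h2reg]; norm_num)
          match w, hw with
          | none, hw => exact (S.loopless.irrefl none hw).elim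
          | some a, hw =>
            refine ⟨x - a, ?_⟩
            show S.Adj none (some (x - (x - a)))
            have h1 : x - (x - a) = a := by ring
            rw [h1]; exact hw
        | some x, none =>
          obtain ⟨w, hw⟩ := (SimpleGraph.degree_pos_iff_exists_adj S none).mp
            (by rw [h2reg]; norm_num)
          match w, hw with
          | none, hw => exact (S.loopless.irrefl none hw).elim
          | some a, hw =>
            refine ⟨x - a, ?_⟩
            show S.Adj (some (x - (x - a))) none
            have h1 : x - (x - a) = a := by ring
            rw [h1]; exact hw.symm
      obtain ⟨j, hj⟩ := key
      obtain ⟨i, hi, heq⟩ := translate_reduce n S hper j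
      refine ⟨i, Finset.mem_range.mpr hi, ?_⟩
      rw [SimpleGraph.mem_edgeFinset, SimpleGraph.mem_edgeSet, heq]
      exact hj
  -- multiset inequality
  classical
  set T := ∑ i ∈ Finset.range n, (gTranslate S ((i : ℕ) : ZMod (2 * n))).edgeFinset.val with hT
  have hle : (⊤ : SimpleGraph (Option (ZMod (2 * n)))).edgeFinset.val ≤ T := by
    rw [Multiset.le_iff_count]
    intro a
    by_cases ha : a ∈ (⊤ : SimpleGraph (Option (ZMod (2 * n)))).edgeFinset
    · rw [Multiset.count_eq_one_of_mem (Finset.nodup _) ha]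
      obtain ⟨i, hi, hmem⟩ := hcov a ha
      have h1 : Multiset.count a T = ∑ i ∈ Finset.range n,
          Multiset.count a (gTranslate S ((i : ℕ) : ZMod (2 * n))).edgeFinset.val := by
        rw [hT]; exact Multiset.count_sum'
      rw [h1]
      have h2 := Finset.single_le_sum
        (f := fun i => Multiset.count a (gTranslate S ((i : ℕ) : ZMod (2 * n))).edgeFinset.val)
        (fun _ _ => Nat.zero_le _) hi
      rwa [Multiset.count_eq_one_of_mem (Finset.nodup _) hmem] at h2
    · rw [Multiset.count_eq_zero_of_notMem ha]
      exact Nat.zero_le _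
  have hcardT : Multiset.card T = n * (2 * n + 1) := by
    rw [hT, multiset_card_finset_sum]
    simp [hE]
  have hcardTop : (⊤ : SimpleGraph (Option (ZMod (2 * n)))).edgeFinset.card = n * (2 * n + 1) := by
    rw [SimpleGraph.card_edgeFinset_top_eq_card_choose_two, hcardV, Nat.choose_two_right]
    have : 2 * n + 1 - 1 = 2 * n := rfl
    rw [this]
    rw [show (2 * n + 1) * (2 * n) = (2 * n + 1) * n * 2 by ring, Nat.mul_div_cancel _ (by norm_num)]
    ring
  refine ⟨?_, fun i _ v => hdeg _ v, fun i _ => ⟨gTranslateIso S _⟩⟩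
  exact (Multiset.eq_of_le_of_card_le hle (hcardT ▸ hcardTop.ge)).symm
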